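/- Let G = (V, E) be a finite graph embedded in the plane such that for each edge e ∈ E there is a topological line ℓ_e ⊆ ℝ² (a closed subset separating the plane into two components) with: e is the unique edge of G intersecting ℓ_e, and the two endpoints of e lie in different components of ℝ² \ ℓ_e. Then every connected component of G is a tree (G contains no cycle). -/

import Mathlib

/-- The union of arcs along a nonempty walk is connected and contains the
positions of both endpoints. -/
lemma walk_arc_aux {V : Type*} (G : SimpleGraph V)
    (pos : V → ℝ × ℝ) (arc : Sym2 V → Set (ℝ × ℝ))
    (harc_conn : ∀ e ∈ G.edgeSet, IsConnected (arc e))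
    (harc_mem : ∀ v w : V, G.Adj v w → pos v ∈ arc s(v, w) ∧ pos w ∈ arc s(v, w)) :
    ∀ {a b : V} (q : G.Walk a b), ¬ q.Nil →
      IsConnected (⋃ e ∈ q.edges, arc e) ∧
      pos a ∈ ⋃ e ∈ q.edges, arc e ∧ pos b ∈ ⋃ e ∈ q.edges, arc e := by
  intro a b q
  induction q with
  | nil => intro h; exact absurd SimpleGraph.Walk.Nil.nil h
  | @cons a c b h q' ih =>
    intro _
    have hedge : s(a, c) ∈ G.edgeSet := h
    have hmem := harc_mem a c h
    have hmem1 : pos a ∈ ⋃ e ∈ (SimpleGraph.Walk.cons h q').edges, arc e := by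
      exact Set.mem_biUnion List.mem_cons_self hmem.1
    by_cases hq' : q'.Nil
    · obtain rfl := hq'.eq
      obtain rfl := hq'.eq_nil
      have hset : (⋃ e ∈ (SimpleGraph.Walk.cons h SimpleGraph.Walk.nil).edges, arc e)
          = arc s(a, c) := by
        simp
      rw [hset]
      exact ⟨harc_conn _ hedge, hmem.1, hmem.2⟩
    · obtain ⟨ihc, ihm1, ihm2⟩ := ih hq'
      have hset : (⋃ e ∈ (SimpleGraph.Walk.cons h q').edges, arc e)
          = arc s(a, c) ∪ ⋃ e ∈ q'.edges, arc e := by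
        simp [SimpleGraph.Walk.edges_cons]
      rw [hset]
      refine ⟨(harc_conn _ hedge).union ?_ ihc, Or.inl hmem.1, Or.inr ihm2⟩
      exact ⟨pos c, hmem.2, ihm1⟩

/-- A finite graph embedded in the plane, each of whose edges admits a
separating topological line meeting no other edge and separating the edge's
endpoints, is a forest (acyclic). -/
theorem stmt_13 {V : Type*} [Finite V] (G : SimpleGraph V)
    (pos : V → ℝ × ℝ) (arc : Sym2 V → Set (ℝ × ℝ))
    (harc_conn : ∀ e ∈ G.edgeSet, IsConnected (arc e))
    (harc_mem : ∀ v w : V, G.Adj v w → pos v ∈ arc s(v, w) ∧ pos w ∈ arc s(v, w))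
    (ℓ : Sym2 V → Set (ℝ × ℝ))
    (hclosed : ∀ e ∈ G.edgeSet, IsClosed (ℓ e))
    (hsep : ∀ v w : V, G.Adj v w →
      ∃ Lc Rc : Set (ℝ × ℝ), IsOpen Lc ∧ IsOpen Rc ∧ IsConnected Lc ∧
        IsConnected Rc ∧ Disjoint Lc Rc ∧ Lc ∪ Rc = (ℓ s(v, w))ᶜ ∧
        pos v ∈ Lc ∧ pos w ∈ Rc)
    (hunique : ∀ e ∈ G.edgeSet, ∀ e' ∈ G.edgeSet, e' ≠ e →
      Disjoint (arc e') (ℓ e)) :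
    G.IsAcyclic := by
  intro v p hp
  cases p with
  | nil => exact hp.ne_nil rfl
  | @cons _ w _ h q =>
    -- the first edge is s(v, w); q is a walk from w back to v avoiding it
    have hedge : s(v, w) ∈ G.edgeSet := h
    obtain ⟨Lc, Rc, hLo, hRo, _, _, hdisj, hcompl, hvL, hwR⟩ := hsep v w h
    have hqnil : ¬ q.Nil := SimpleGraph.Walk.not_nil_of_ne h.ne.symm
    have hnodup : s(v, w) ∉ q.edges := by
      have := hp.edges_nodup
      rw [SimpleGraph.Walk.edges_cons] at this
      exact (List.nodup_cons.mp this).1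
    obtain ⟨hconn, hmw, hmv⟩ := walk_arc_aux G pos arc harc_conn harc_mem q hqnil
    set S := ⋃ e ∈ q.edges, arc e with hS
    have hsub : S ⊆ Lc ∪ Rc := by
      rw [hcompl]
      intro x hx
      obtain ⟨e', he', hxe⟩ := Set.mem_iUnion₂.mp hx
      have he'E : e' ∈ G.edgeSet := q.edges_subset_edgeSet he'
      have hne : e' ≠ s(v, w) := fun hh => hnodup (hh ▸ he')
      exact fun hxl => (hunique _ hedge _ he'E hne).le_bot ⟨hxe, hxl⟩
    rcases hconn.isPreconnected.subset_or_subset hLo hRo hdisj hsub with hc | hc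
    · exact hdisj.le_bot ⟨hc hmw, hwR⟩
    · exact hdisj.le_bot ⟨hvL, hc hmv⟩
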